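/- For real a > 0 and half-integer m ≥ 1/2, the high-SNR asymptotic holds: (1 + a/sin²θ)^{−m} ≤ (sin²θ/a)^m for all θ ∈ (0, π/2), and moreover a^m · ∫₀^{π/2} (1 + a/sin²θ)^{−m} dθ → ∫₀^{π/2} sin^{2m}θ dθ = (√π/2) Γ(m+1/2)/Γ(m+1) as a → ∞. -/

import Mathlib

open Real Filter MeasureTheory

lemma sinpow_gamma (n : ℕ) :
    ∫ θ in (0:ℝ)..(Real.pi/2), Real.sin θ ^ n
      = Real.sqrt Real.pi / 2 * Real.Gamma (((n:ℝ)+1)/2) / Real.Gamma ((n:ℝ)/2+1) := by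
  induction n using Nat.strong_induction_on with
  | _ n ih =>
    match n with
    | 0 =>
        simp only [pow_zero, Nat.cast_zero, intervalIntegral.integral_const, smul_eq_mul,
          mul_one, sub_zero, zero_add, zero_div, Real.Gamma_one, div_one]
        rw [Real.Gamma_one_half_eq, div_mul_eq_mul_div, Real.mul_self_sqrt Real.pi_pos.le]
    | 1 =>
        norm_num [integral_sin]
        rw [show (3:ℝ)/2 = 1/2 + 1 by norm_num, Real.Gamma_add_one (by norm_num),
          Real.Gamma_one_half_eq]
        rw [eq_comm, div_eq_one_iff_eq (by positivity)]
        ring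
    | (n+2) =>
        rw [integral_sin_pow]
        simp only [Real.sin_zero, Real.cos_pi_div_two, Real.sin_pi_div_two, Real.cos_zero]
        rw [zero_pow (Nat.succ_ne_zero n)]
        rw [ih n (by omega)]
        have h1 : ((n:ℝ)+2+1)/2 = ((n:ℝ)+1)/2 + 1 := by ring
        have h2 : ((n:ℝ)+2)/2 + 1 = ((n:ℝ)/2 + 1) + 1 := by ring
        push_cast
        rw [h1, h2, Real.Gamma_add_one (show ((n:ℝ)+1)/2 ≠ 0 by positivity),
          Real.Gamma_add_one (show (n:ℝ)/2 + 1 ≠ 0 by positivity)]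
        have g1 : Real.Gamma (((n:ℝ)+1)/2) ≠ 0 := ne_of_gt (Real.Gamma_pos_of_pos (by positivity))
        have g2 : Real.Gamma ((n:ℝ)/2+1) ≠ 0 := ne_of_gt (Real.Gamma_pos_of_pos (by positivity))
        have h3 : (n:ℝ) + 2 ≠ 0 := by positivity
        field_simp
        ring


theorem part1 (m : ℝ) (hm : 1/2 ≤ m) :
    ∀ a : ℝ, 0 < a → ∀ θ ∈ Set.Ioo (0:ℝ) (Real.pi/2),
        (1 + a / Real.sin θ ^ 2) ^ (-m) ≤ (Real.sin θ ^ 2 / a) ^ m := by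
  intro a ha θ hθ
  have hs : 0 < Real.sin θ := Real.sin_pos_of_pos_of_lt_pi hθ.1
    (lt_trans hθ.2 (by linarith [Real.pi_pos]))
  have hs2 : (0:ℝ) < Real.sin θ ^ 2 := by positivity
  have h1 : (0:ℝ) < a / Real.sin θ ^ 2 := by positivity
  have key : (1 + a / Real.sin θ ^ 2) ^ (-m) ≤ (a / Real.sin θ ^ 2) ^ (-m) :=
    Real.rpow_le_rpow_of_nonpos h1 (by linarith) (by linarith)
  refine key.trans_eq ?_
  rw [Real.rpow_neg h1.le, ← Real.inv_rpow h1.le, inv_div]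


theorem part2 (m : ℝ) (hm : 1/2 ≤ m) :
    Tendsto (fun a : ℝ => a ^ m * ∫ θ in (0:ℝ)..(Real.pi/2), (1 + a / Real.sin θ ^ 2) ^ (-m))
      atTop (nhds (∫ θ in (0:ℝ)..(Real.pi/2), Real.sin θ ^ (2 * m))) := by
  have hm0 : (0:ℝ) < m := by linarith
  have hle : (0:ℝ) ≤ Real.pi / 2 := by positivity
  have key : Tendsto
      (fun a : ℝ => ∫ θ in Set.Ioc (0:ℝ) (Real.pi/2), a ^ m * (1 + a / Real.sin θ ^ 2) ^ (-m))
      atTop (nhds (∫ θ in Set.Ioc (0:ℝ) (Real.pi/2), Real.sin θ ^ (2 * m))) := by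
    apply tendsto_integral_filter_of_dominated_convergence (fun _ => (1:ℝ))
    · filter_upwards [eventually_ge_atTop (1:ℝ)] with a ha1
      refine ContinuousOn.aestronglyMeasurable ?_ measurableSet_Ioc
      refine continuousOn_const.mul (ContinuousOn.rpow_const ?_ ?_)
      · refine continuousOn_const.add (continuousOn_const.div
          ((Real.continuous_sin.continuousOn).pow 2) ?_)
        intro θ hθ
        have hs : 0 < Real.sin θ := Real.sin_pos_of_pos_of_lt_pi hθ.1
          (lt_of_le_of_lt hθ.2 (by linarith [Real.pi_pos]))
        positivity
      · intro θ hθ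
        have hs : 0 < Real.sin θ := Real.sin_pos_of_pos_of_lt_pi hθ.1
          (lt_of_le_of_lt hθ.2 (by linarith [Real.pi_pos]))
        left
        positivity
    · filter_upwards [eventually_ge_atTop (1:ℝ)] with a ha1
      have ha : (0:ℝ) < a := by linarith
      filter_upwards [ae_restrict_mem measurableSet_Ioc] with θ hθ
      have hs : 0 < Real.sin θ := Real.sin_pos_of_pos_of_lt_pi hθ.1
        (lt_of_le_of_lt hθ.2 (by linarith [Real.pi_pos]))
      have hs2 : (0:ℝ) < Real.sin θ ^ 2 := by positivity
      have hd : (0:ℝ) < 1 + a / Real.sin θ ^ 2 := by positivity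
      have hE : a ^ m * (1 + a / Real.sin θ ^ 2) ^ (-m) = (a / (1 + a / Real.sin θ ^ 2)) ^ m := by
        rw [Real.div_rpow ha.le hd.le, Real.rpow_neg hd.le, ← div_eq_mul_inv]
      have hb : a / (1 + a / Real.sin θ ^ 2) ≤ 1 := by
        have h1 : a / Real.sin θ ^ 2 ≤ 1 + a / Real.sin θ ^ 2 := by linarith
        have h2 : a / (1 + a / Real.sin θ ^ 2) ≤ a / (a / Real.sin θ ^ 2) :=
          div_le_div_of_nonneg_left ha.le (by positivity) h1
        have h3 : a / (a / Real.sin θ ^ 2) = Real.sin θ ^ 2 := by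
          field_simp
        have h4 : Real.sin θ ^ 2 ≤ 1 := by
          have := Real.sin_le_one θ
          nlinarith
        linarith
      rw [Real.norm_eq_abs, hE, abs_of_nonneg (Real.rpow_nonneg (by positivity) m)]
      exact Real.rpow_le_one (by positivity) hb hm0.le
    · exact integrableOn_const measure_Ioc_lt_top.ne
    · filter_upwards [ae_restrict_mem measurableSet_Ioc] with θ hθ
      have hs : 0 < Real.sin θ := Real.sin_pos_of_pos_of_lt_pi hθ.1
        (lt_of_le_of_lt hθ.2 (by linarith [Real.pi_pos]))
      have hs2 : (0:ℝ) < Real.sin θ ^ 2 := by positivity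
      set s : ℝ := Real.sin θ ^ 2 with hsdef
      have hlim : Tendsto (fun a : ℝ => (s / (s / a + 1)) ^ m) atTop
          (nhds ((s / (0 + 1)) ^ m)) := by
        have h0 : Tendsto (fun a : ℝ => s / a) atTop (nhds 0) :=
          tendsto_const_nhds.div_atTop tendsto_id
        have h1 : Tendsto (fun a : ℝ => s / a + 1) atTop (nhds (0 + 1)) :=
          h0.add tendsto_const_nhds
        have h2 : Tendsto (fun a : ℝ => s / (s / a + 1)) atTop (nhds (s / (0 + 1))) :=
          tendsto_const_nhds.div h1 (by norm_num)
        exact ((Real.continuousAt_rpow_const _ m (Or.inl (by positivity))).tendsto).comp h2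
      have heq : (s / (0 + 1)) ^ m = Real.sin θ ^ (2 * m) := by
        rw [zero_add, div_one, hsdef, ← Real.rpow_natCast (Real.sin θ) 2,
          ← Real.rpow_mul hs.le]
        norm_num
      rw [heq] at hlim
      refine hlim.congr' ?_
      filter_upwards [eventually_ge_atTop (1:ℝ)] with a ha1
      have ha : (0:ℝ) < a := by linarith
      have hd : (0:ℝ) < 1 + a / s := by positivity
      have hE : a ^ m * (1 + a / s) ^ (-m) = (a / (1 + a / s)) ^ m := by
        rw [Real.div_rpow ha.le hd.le, Real.rpow_neg hd.le, ← div_eq_mul_inv]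
      have hE2 : a / (1 + a / s) = s / (s / a + 1) := by
        rw [div_eq_div_iff hd.ne' (by positivity : (0:ℝ) < s/a+1).ne']
        field_simp
      rw [hE, hE2]
  rw [intervalIntegral.integral_of_le hle]
  refine key.congr fun a => ?_
  rw [intervalIntegral.integral_of_le hle, ← integral_const_mul]


theorem stmt16 (m : ℝ) (hm : 1/2 ≤ m) (hhalf : ∃ k : ℕ, 2 * m = (k : ℝ) + 1) :
    (∀ a : ℝ, 0 < a → ∀ θ ∈ Set.Ioo (0:ℝ) (Real.pi/2),
        (1 + a / Real.sin θ ^ 2) ^ (-m) ≤ (Real.sin θ ^ 2 / a) ^ m) ∧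
    Tendsto (fun a : ℝ => a ^ m * ∫ θ in (0:ℝ)..(Real.pi/2), (1 + a / Real.sin θ ^ 2) ^ (-m))
      atTop (nhds (∫ θ in (0:ℝ)..(Real.pi/2), Real.sin θ ^ (2 * m))) ∧
    ∫ θ in (0:ℝ)..(Real.pi/2), Real.sin θ ^ (2 * m)
      = (Real.sqrt Real.pi / 2) * Real.Gamma (m + 1/2) / Real.Gamma (m + 1) := by
  obtain ⟨k, hk⟩ := hhalf
  have hform : ∫ θ in (0:ℝ)..(Real.pi/2), Real.sin θ ^ (2 * m)
      = (Real.sqrt Real.pi / 2) * Real.Gamma (m + 1/2) / Real.Gamma (m + 1) := by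
    have hpow : ∀ θ : ℝ, Real.sin θ ^ (2*m) = Real.sin θ ^ ((k+1 : ℕ) : ℝ) := by
      intro θ; rw [hk]; push_cast; ring_nf
    have h1 : m + 1/2 = (((k+1:ℕ):ℝ) + 1)/2 := by push_cast; linarith
    have h2 : m + 1 = ((k+1:ℕ):ℝ)/2 + 1 := by push_cast; linarith
    calc ∫ θ in (0:ℝ)..(Real.pi/2), Real.sin θ ^ (2 * m)
        = ∫ θ in (0:ℝ)..(Real.pi/2), Real.sin θ ^ (k+1 : ℕ) := by
          simp_rw [hpow, Real.rpow_natCast]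
      _ = Real.sqrt Real.pi / 2 * Real.Gamma ((((k+1:ℕ):ℝ)+1)/2) / Real.Gamma (((k+1:ℕ):ℝ)/2+1) :=
          sinpow_gamma (k+1)
      _ = (Real.sqrt Real.pi / 2) * Real.Gamma (m + 1/2) / Real.Gamma (m + 1) := by
          rw [h1, h2]
  exact ⟨part1 m hm, part2 m hm, hform⟩
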